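/- In a graph (bipartite or not), the sum over all edges $(u,v)$ of $\min(\deg u, \deg v)$ is an upper bound on the total number of wedges counted by the vertex-priority scheme: the number of wedges $\langle x \leadsto y \leadsto z\rangle$ with $\mathrm{pr}(x) \prec \mathrm{pr}(y)$ and $\mathrm{pr}(x) \prec \mathrm{pr}(z)$ is at most $\sum_{(x,y) \in E} \min(\deg x, \deg y)$. -/

import Mathlib

open Finset

private lemma wedge_fiber_bound {V : Type*} [Fintype V] [DecidableEq V]
    (G : SimpleGraph V) [DecidableRel G.Adj] (id : V → ℕ) (a b : V)
    (h : ¬ (G.degree a < G.degree b ∨ (G.degree b = G.degree a ∧ id b < id a))) :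
    ((Finset.univ.filter fun p : V × V × V =>
        G.Adj p.1 p.2.1 ∧ G.Adj p.2.1 p.2.2 ∧ p.1 ≠ p.2.2 ∧
        (G.degree p.2.1 < G.degree p.1 ∨
          (G.degree p.1 = G.degree p.2.1 ∧ id p.1 < id p.2.1)) ∧
        (G.degree p.2.2 < G.degree p.1 ∨
          (G.degree p.1 = G.degree p.2.2 ∧ id p.1 < id p.2.2))).filter
        fun p => s(p.1, p.2.1) = s(a, b)).card ≤ G.degree b := by
  classical
  have hsub : ((Finset.univ.filter fun p : V × V × V =>
        G.Adj p.1 p.2.1 ∧ G.Adj p.2.1 p.2.2 ∧ p.1 ≠ p.2.2 ∧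
        (G.degree p.2.1 < G.degree p.1 ∨
          (G.degree p.1 = G.degree p.2.1 ∧ id p.1 < id p.2.1)) ∧
        (G.degree p.2.2 < G.degree p.1 ∨
          (G.degree p.1 = G.degree p.2.2 ∧ id p.1 < id p.2.2))).filter
        fun p => s(p.1, p.2.1) = s(a, b)) ⊆
      (G.neighborFinset b).image (fun z => (a, b, z)) := by
    intro p hp
    simp only [mem_filter, mem_univ, true_and] at hp
    obtain ⟨⟨hadj1, hadj2, hne, hp1, hp2⟩, heq⟩ := hp
    rw [Sym2.eq_iff] at heq
    rcases heq with ⟨h1, h2⟩ | ⟨h1, h2⟩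
    · simp only [mem_image, SimpleGraph.mem_neighborFinset]
      refine ⟨p.2.2, ?_, ?_⟩
      · rw [← h2]; exact hadj2
      · rw [← h1, ← h2]
    · rw [h1, h2] at hp1
      exact absurd hp1 h
  calc _ ≤ ((G.neighborFinset b).image (fun z => (a, b, z))).card :=
        Finset.card_le_card hsub
    _ ≤ (G.neighborFinset b).card := Finset.card_image_le
    _ = G.degree b := G.card_neighborFinset_eq_degree b

theorem stmt11 {V : Type*} [Fintype V] [DecidableEq V]
    (G : SimpleGraph V) [DecidableRel G.Adj]
    (id : V → ℕ) (hid : Function.Injective id) :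
    (Finset.univ.filter fun p : V × V × V =>
        G.Adj p.1 p.2.1 ∧ G.Adj p.2.1 p.2.2 ∧ p.1 ≠ p.2.2 ∧
        (G.degree p.2.1 < G.degree p.1 ∨
          (G.degree p.1 = G.degree p.2.1 ∧ id p.1 < id p.2.1)) ∧
        (G.degree p.2.2 < G.degree p.1 ∨
          (G.degree p.1 = G.degree p.2.2 ∧ id p.1 < id p.2.2))).card ≤
      ∑ e ∈ G.edgeFinset,
        Sym2.lift ⟨fun x y => min (G.degree x) (G.degree y),
          fun x y => min_comm _ _⟩ e := by
  classical
  rw [Finset.card_eq_sum_card_fiberwise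
    (f := fun p : V × V × V => s(p.1, p.2.1)) (t := G.edgeFinset)
    (by
      intro p hp
      simp only [mem_coe, mem_filter, mem_univ, true_and] at hp
      rw [Finset.mem_coe, SimpleGraph.mem_edgeFinset]
      exact hp.1)]
  refine Finset.sum_le_sum ?_
  intro e he
  induction e using Sym2.ind with
  | _ a b =>
    rw [Sym2.lift_mk]
    simp only [SimpleGraph.mem_edgeFinset, SimpleGraph.mem_edgeSet] at he
    by_cases hba : G.degree a < G.degree b ∨ (G.degree b = G.degree a ∧ id b < id a)
    · -- b has higher priority; fiber elements start at b, bound by degree a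
      have hab : ¬ (G.degree b < G.degree a ∨ (G.degree a = G.degree b ∧ id a < id b)) := by
        rcases hba with h | ⟨h1, h2⟩ <;> omega
      have hle : G.degree a ≤ G.degree b := by
        rcases hba with h | ⟨h1, h2⟩ <;> omega
      have := wedge_fiber_bound G id b a hab
      calc _ ≤ G.degree a := by
            convert this using 2
            ext p
            simp only [mem_filter]
            rw [show s(b, a) = s(a, b) from Sym2.eq_swap]
        _ = min (G.degree a) (G.degree b) := (min_eq_left hle).symm
    · have hle : G.degree b ≤ G.degree a := by
        push_neg at hba
        omega
      calc _ ≤ G.degree b := wedge_fiber_bound G id a b hba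
        _ = min (G.degree a) (G.degree b) := (min_eq_right hle).symm
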